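/- For every positive integer n and every integer k with 0 ≤ k ≤ n, the identity Σ_{T ∈ RInc_k(2×n)} q^{maj(T)} = q^{n−k} · Σ_{T ∈ RInc_k(2×n)} q^{amaj(T)} holds in ℤ[q]. -/

import Mathlib

open Polynomial

/-- Major index: sum of all `i` such that `i` appears in row 1 and `i+1` appears in row 2. -/
def maj {n : ℕ} (T : (Fin n → ℕ) × (Fin n → ℕ)) : ℕ :=
  ∑ i ∈ (Finset.image T.1 Finset.univ).filter (fun i => ∃ j, T.2 j = i + 1), i

/-- Amajor index: sum of all `i` such that `i` appears in row 2 and `i+1` appears in row 1. -/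
def amaj {n : ℕ} (T : (Fin n → ℕ) × (Fin n → ℕ)) : ℕ :=
  ∑ i ∈ (Finset.image T.2 Finset.univ).filter (fun i => ∃ j, T.1 j = i + 1), i

/-- Row-increasing tableaux of shape 2×n with entry set `{1, …, 2n−k}`:
rows strictly increasing, columns weakly increasing. -/
def RInc (n k : ℕ) : Set ((Fin n → ℕ) × (Fin n → ℕ)) :=
  {T | StrictMono T.1 ∧ StrictMono T.2 ∧ (∀ i, T.1 i ≤ T.2 i) ∧
    Set.range T.1 ∪ Set.range T.2 = Set.Icc 1 (2 * n - k)}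

namespace MajWord

inductive L where | U | D | B
deriving DecidableEq, Repr

open L

def L.isTop : L → Bool | U => true | D => false | B => true
def L.isBot : L → Bool | U => false | D => true | B => true

def headBot : List L → Bool | [] => false | a :: _ => a.isBot
def headTop : List L → Bool | [] => false | a :: _ => a.isTop
def headU : List L → Bool | U :: _ => true | _ => false

/-- maj with offset: gaps numbered p+1, p+2, … -/
def majA : ℕ → List L → ℕ
  | _, [] => 0
  | p, a :: l => (if a.isTop && headBot l then p + 1 else 0) + majA (p+1) l

def amajA : ℕ → List L → ℕ
  | _, [] => 0
  | p, a :: l => (if a.isBot && headTop l then p + 1 else 0) + amajA (p+1) l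

def cU : List L → ℕ := List.countP (· == U)

mutual
def phi : List L → List L
  | [] => []
  | U :: w => U :: phi w
  | D :: w => ins D w
  | B :: w => ins B w
termination_by w => 2 * w.length
def ins : L → List L → List L
  | c, [] => [c]
  | c, U :: w => c :: U :: phi w
  | c, D :: w => D :: ins c w
  | c, B :: w => B :: ins c w
termination_by _ w => 2 * w.length + 1
end

mutual
theorem phi_perm : ∀ w : List L, (phi w).Perm w
  | [] => by rw [phi]
  | U :: w => by rw [phi]; exact (phi_perm w).cons U
  | D :: w => by rw [phi]; exact ins_perm D w
  | B :: w => by rw [phi]; exact ins_perm B w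
termination_by w => 2 * w.length
theorem ins_perm : ∀ (c : L) (w : List L), (ins c w).Perm (c :: w)
  | c, [] => by rw [ins]
  | c, U :: w => by rw [ins]; exact ((phi_perm w).cons U).cons c
  | c, D :: w => by
      rw [ins]
      exact ((ins_perm c w).cons D).trans (List.Perm.swap c D w)
  | c, B :: w => by
      rw [ins]
      exact ((ins_perm c w).cons B).trans (List.Perm.swap c B w)
termination_by _ w => 2 * w.length + 1
end

theorem ins_ne_nil (c : L) (w : List L) : ins c w ≠ [] := by
  have := (ins_perm c w).length_eq; intro h; rw [h] at this; simp at this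

theorem headU_ins (c : L) (hc : c ≠ U) (w : List L) : headU (ins c w) = false := by
  match w with
  | [] => rw [ins]; cases c <;> simp_all [headU]
  | U :: t => rw [ins]; cases c <;> simp_all [headU]
  | D :: t => rw [ins]; simp [headU]
  | B :: t => rw [ins]; simp [headU]

theorem headBot_ins (c : L) (hc : c ≠ U) (w : List L) : headBot (ins c w) = true := by
  match w with
  | [] => rw [ins]; cases c <;> simp_all [headBot, L.isBot]
  | U :: t => rw [ins]; cases c <;> simp_all [headBot, L.isBot]
  | D :: t => rw [ins]; simp [headBot, L.isBot]
  | B :: t => rw [ins]; simp [headBot, L.isBot]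

theorem headU_phi (w : List L) : headU (phi w) = headU w := by
  match w with
  | [] => rw [phi]
  | U :: t => rw [phi]; simp [headU]
  | D :: t => rw [phi, headU_ins D (by simp) t]; simp [headU]
  | B :: t => rw [phi, headU_ins B (by simp) t]; simp [headU]

theorem headBot_eq_not_headU (w : List L) (hw : w ≠ []) : headBot w = !headU w := by
  match w with
  | U :: t => simp [headBot, headU, L.isBot]
  | D :: t => simp [headBot, headU, L.isBot]
  | B :: t => simp [headBot, headU, L.isBot]

/-- we use `¬ w.getLast? = some U` as "doesn't end with U" (true for `[]`). -/
def NEU (w : List L) : Prop := w.getLast? ≠ some U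

theorem NEU_cons_cons {a b : L} {t : List L} (h : NEU (a :: b :: t)) : NEU (b :: t) := by
  rwa [NEU, List.getLast?_cons_cons] at h

theorem NEU_of_cons {b : L} {t : List L} (h : NEU (b :: t)) :
    t ≠ [] → NEU t := by
  intro ht; cases t with
  | nil => simp at ht
  | cons x s => rwa [NEU, List.getLast?_cons_cons] at h

theorem NEU_single {c : L} (hc : c ≠ U) : NEU [c] := by
  simp [NEU, hc]

theorem NEU_cons_of {c b : L} {t : List L} (hc : c ≠ U) (h : NEU (b :: t)) : NEU (c :: t) := by
  cases t with
  | nil => exact NEU_single hc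
  | cons x s => rw [NEU, List.getLast?_cons_cons]; rwa [NEU, List.getLast?_cons_cons] at h

mutual
theorem key_phi : ∀ (w : List L), NEU w → ∀ p,
    majA p (phi w) = amajA p w + cU w + p * (if headU w then 1 else 0)
  | [], _, p => by rw [phi]; simp [majA, amajA, cU, headU]
  | U :: w', hw, p => by
      have hw' : w' ≠ [] := by
        intro h; subst h; exact hw (by simp [NEU])
      have hNE : NEU w' := NEU_of_cons hw hw'
      rw [phi]
      have hlen : phi w' ≠ [] := by
        intro h; have := (phi_perm w').length_eq; rw [h] at this
        exact hw' (List.length_eq_zero_iff.mp this.symm)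
      rw [majA]
      rw [headBot_eq_not_headU _ hlen, headU_phi]
      rw [key_phi w' hNE (p+1)]
      rw [amajA]
      simp only [cU, List.countP_cons]
      cases hcase : headU w' <;> simp [headU, L.isTop, L.isBot, amajA, cU] <;> ring
  | D :: w', hw, p => by
      rw [phi]
      rw [key_ins D w' (by simp) (by exact hw) p]
      rw [amajA]
      simp only [cU, List.countP_cons]
      cases w' with
      | nil => simp [headU, headTop, L.isBot, amajA]
      | cons x t =>
        cases x <;> simp [headU, headTop, L.isBot, L.isTop, amajA] <;> ring
  | B :: w', hw, p => by
      rw [phi]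
      rw [key_ins B w' (by simp) (by exact hw) p]
      rw [amajA]
      simp only [cU, List.countP_cons]
      cases w' with
      | nil => simp [headU, headTop, L.isBot, amajA]
      | cons x t =>
        cases x <;> simp [headU, headTop, L.isBot, L.isTop, amajA] <;> ring
termination_by w => 2 * w.length

theorem key_ins : ∀ (c : L) (w : List L), c ≠ U → NEU (c :: w) → ∀ p,
    majA p (ins c w) = (p+1) * (if headTop w then 1 else 0) + amajA (p+1) w + cU w
  | c, [], hc, _, p => by
      rw [ins]; simp [majA, amajA, cU, headTop, headBot]
  | c, U :: t, hc, hw, p => by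
      have hNE : NEU (U :: t) := NEU_cons_cons hw
      have ht : t ≠ [] := by
        intro h; subst h; exact hNE (by simp [NEU])
      rw [ins, majA]
      have h1 : headBot (U :: phi t) = false := by simp [headBot, L.isBot]
      rw [h1]
      have h2 : (U :: phi t) = phi (U :: t) := by rw [phi]
      rw [h2, key_phi (U :: t) hNE (p+1)]
      simp only [amajA, cU, List.countP_cons, headU, headTop]
      cases c <;> simp [L.isTop, L.isBot] <;> ring
  | c, D :: t, hc, hw, p => by
      have hNE : NEU (c :: t) := NEU_cons_of hc (NEU_cons_cons hw)
      rw [ins, majA]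
      have h1 : headBot (ins c t) = true := headBot_ins c hc t
      rw [key_ins c t hc hNE (p+1)]
      simp only [amajA, cU, List.countP_cons, headTop, L.isTop, L.isBot]
      simp <;> split_ifs with hs <;> simp [hs] <;> ring
  | c, B :: t, hc, hw, p => by
      have hNE : NEU (c :: t) := NEU_cons_of hc (NEU_cons_cons hw)
      rw [ins, majA]
      rw [headBot_ins c hc t]
      rw [key_ins c t hc hNE (p+1)]
      simp only [amajA, cU, List.countP_cons, headTop, L.isTop, L.isBot]
      simp <;> split_ifs with hs <;> simp [hs] <;> ring
termination_by c w => 2 * w.length + 1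
end


theorem length_phi (w : List L) : (phi w).length = w.length := (phi_perm w).length_eq

theorem length_ins (c : L) (w : List L) : (ins c w).length = w.length + 1 :=
  (ins_perm c w).length_eq

theorem cons_U_ne_ins {c : L} (hc : c ≠ U) {l : List L} {w : List L} : U :: l ≠ ins c w := by
  intro h
  have := headU_ins c hc w
  rw [← h] at this; simp [headU] at this

/-- ballot predicate with current height `h`. -/
def bal : ℕ → List L → Prop
  | _, [] => True
  | h, U :: w => bal (h+1) w
  | h, D :: w => 1 ≤ h ∧ bal (h-1) w
  | h, B :: w => bal h w

mutual
theorem bal_phi : ∀ (w : List L) (h : ℕ), bal h w → bal h (phi w)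
  | [], h, hb => by rwa [phi]
  | U :: w, h, hb => by
      rw [phi]; simp only [bal] at hb ⊢; exact bal_phi w (h+1) hb
  | D :: w, h, hb => by rw [phi]; exact bal_ins D w (by simp) h hb
  | B :: w, h, hb => by rw [phi]; exact bal_ins B w (by simp) h hb
termination_by w => 2 * w.length
theorem bal_ins : ∀ (c : L) (w : List L), c ≠ U → ∀ h, bal h (c :: w) → bal h (ins c w)
  | c, [], hc, h, hb => by rw [ins]; exact hb
  | c, U :: t, hc, h, hb => by
      rw [ins]
      cases c with
      | U => exact absurd rfl hc
      | D =>
          simp only [bal] at hb ⊢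
          exact ⟨hb.1, bal_phi t (h-1+1) hb.2⟩
      | B =>
          simp only [bal] at hb ⊢
          exact bal_phi t (h+1) hb
  | c, D :: t, hc, h, hb => by
      rw [ins]
      cases c with
      | U => exact absurd rfl hc
      | D =>
          simp only [bal] at hb ⊢
          exact ⟨hb.1, bal_ins D t (by simp) (h-1) hb.2⟩
      | B =>
          simp only [bal] at hb ⊢
          exact ⟨hb.1, bal_ins B t (by simp) (h-1) hb.2⟩
  | c, B :: t, hc, h, hb => by
      rw [ins]
      cases c with
      | U => exact absurd rfl hc
      | D =>
          simp only [bal] at hb ⊢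
          exact bal_ins D t (by simp) h hb
      | B =>
          simp only [bal] at hb ⊢
          exact bal_ins B t (by simp) h hb
termination_by _ w => 2 * w.length + 1
end

mutual
theorem phi_inj : ∀ w1 w2 : List L, phi w1 = phi w2 → w1 = w2
  | [], w2, h => by
      have : ([] : List L).Perm w2 := (phi_perm []).symm.trans (h ▸ phi_perm w2)
      exact this.nil_eq
  | w1, [], h => by
      have : w1.Perm ([] : List L) := (phi_perm w1).symm.trans (h ▸ phi_perm [])
      exact this.eq_nil
  | U :: t1, U :: t2, h => by
      rw [phi, phi] at h
      simp only [List.cons.injEq] at h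
      rw [phi_inj t1 t2 h.2]
  | U :: t1, D :: t2, h => by
      rw [phi, phi] at h; exact absurd h (cons_U_ne_ins (by simp))
  | U :: t1, B :: t2, h => by
      rw [phi, phi] at h; exact absurd h (cons_U_ne_ins (by simp))
  | D :: t1, U :: t2, h => by
      rw [phi, phi] at h; exact absurd h.symm (cons_U_ne_ins (by simp))
  | B :: t1, U :: t2, h => by
      rw [phi, phi] at h; exact absurd h.symm (cons_U_ne_ins (by simp))
  | D :: t1, D :: t2, h => by
      rw [phi, phi] at h
      obtain ⟨_, ht⟩ := ins_inj D D t1 t2 (by simp) (by simp) h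
      rw [ht]
  | D :: t1, B :: t2, h => by
      rw [phi, phi] at h
      obtain ⟨hc, _⟩ := ins_inj D B t1 t2 (by simp) (by simp) h
      exact absurd hc (by simp)
  | B :: t1, D :: t2, h => by
      rw [phi, phi] at h
      obtain ⟨hc, _⟩ := ins_inj B D t1 t2 (by simp) (by simp) h
      exact absurd hc (by simp)
  | B :: t1, B :: t2, h => by
      rw [phi, phi] at h
      obtain ⟨_, ht⟩ := ins_inj B B t1 t2 (by simp) (by simp) h
      rw [ht]
termination_by w1 => 2 * w1.length

theorem ins_inj : ∀ (c c' : L) (w w' : List L), c ≠ U → c' ≠ U →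
    ins c w = ins c' w' → c = c' ∧ w = w'
  | c, c', [], [], hc, hc', h => by
      rw [ins, ins] at h; simp at h; exact ⟨h, rfl⟩
  | c, c', [], U :: t', hc, hc', h => by
      rw [ins, ins] at h; simp at h
  | c, c', [], D :: t', hc, hc', h => by
      rw [ins, ins] at h
      have := congrArg List.length h
      simp [(phi_perm _).length_eq, length_ins] at this
  | c, c', [], B :: t', hc, hc', h => by
      rw [ins, ins] at h
      have := congrArg List.length h
      simp [length_ins] at this
  | c, c', U :: t, [], hc, hc', h => by
      rw [ins, ins] at h; simp at h
  | c, c', D :: t, [], hc, hc', h => by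
      rw [ins, ins] at h
      have := congrArg List.length h
      simp [length_ins] at this
  | c, c', B :: t, [], hc, hc', h => by
      rw [ins, ins] at h
      have := congrArg List.length h
      simp [length_ins] at this
  | c, c', U :: t, U :: t', hc, hc', h => by
      rw [ins, ins] at h
      simp only [List.cons.injEq] at h
      exact ⟨h.1, by rw [phi_inj t t' h.2.2]⟩
  | c, c', U :: t, D :: t', hc, hc', h => by
      rw [ins, ins] at h
      simp only [List.cons.injEq] at h
      exact absurd h.2 (cons_U_ne_ins hc')
  | c, c', U :: t, B :: t', hc, hc', h => by
      rw [ins, ins] at h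
      simp only [List.cons.injEq] at h
      exact absurd h.2 (cons_U_ne_ins hc')
  | c, c', D :: t, U :: t', hc, hc', h => by
      rw [ins, ins] at h
      simp only [List.cons.injEq] at h
      exact absurd h.2.symm (cons_U_ne_ins hc)
  | c, c', B :: t, U :: t', hc, hc', h => by
      rw [ins, ins] at h
      simp only [List.cons.injEq] at h
      exact absurd h.2.symm (cons_U_ne_ins hc)
  | c, c', D :: t, D :: t', hc, hc', h => by
      rw [ins, ins] at h
      simp only [List.cons.injEq] at h
      obtain ⟨h1, h2⟩ := ins_inj c c' t t' hc hc' h.2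
      exact ⟨h1, by rw [h2]⟩
  | c, c', D :: t, B :: t', hc, hc', h => by
      rw [ins, ins] at h; simp at h
  | c, c', B :: t, D :: t', hc, hc', h => by
      rw [ins, ins] at h; simp at h
  | c, c', B :: t, B :: t', hc, hc', h => by
      rw [ins, ins] at h
      simp only [List.cons.injEq] at h
      obtain ⟨h1, h2⟩ := ins_inj c c' t t' hc hc' h.2
      exact ⟨h1, by rw [h2]⟩
termination_by _ _ w _ => 2 * w.length + 1
end


/-! ### counting and sum lemmas -/

theorem countP_eq_sum (p : L → Bool) : ∀ l : List L,
    l.countP p = ∑ j ∈ Finset.range l.length, (if p (l.getD j L.B) then 1 else 0)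
  | [] => by simp
  | a :: t => by
      rw [List.length_cons, Finset.sum_range_succ']
      simp only [List.getD_cons_succ, List.getD_cons_zero]
      rw [← countP_eq_sum p t, List.countP_cons]
      try cases hpa : p a <;> simp

theorem countP_eq_card (p : L → Bool) (l : List L) :
    l.countP p = ((Finset.range l.length).filter (fun j => p (l.getD j L.B) = true)).card := by
  rw [countP_eq_sum p l, Finset.card_filter]
  try apply Finset.sum_congr rfl
  all_goals intro j _
  all_goals cases hpj : p (l.getD j L.B) <;> simp

def dsc (l : List L) (j : ℕ) : Bool := (l.getD j L.B).isTop && (l.getD (j+1) L.B).isBot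
def asc (l : List L) (j : ℕ) : Bool := (l.getD j L.B).isBot && (l.getD (j+1) L.B).isTop

theorem majA_eq_sum : ∀ (l : List L) (p : ℕ),
    majA p l = ∑ j ∈ Finset.range (l.length - 1), (if dsc l j then p + j + 1 else 0)
  | [], p => by simp [majA]
  | [a], p => by simp [majA, headBot]
  | a :: b :: t, p => by
      rw [majA, majA_eq_sum (b :: t) (p+1)]
      have hlen : (a :: b :: t).length - 1 = ((b :: t).length - 1) + 1 := by simp
      rw [hlen, Finset.sum_range_succ']
      have h0 : dsc (a :: b :: t) 0 = (a.isTop && headBot (b :: t)) := by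
        simp [dsc, headBot, List.getD]
      have hs : ∀ j : ℕ, dsc (a :: b :: t) (j+1) = dsc (b :: t) j := fun j => rfl
      simp only [h0, hs]
      have : ∀ j, (if dsc (b :: t) j then p + 1 + j + 1 else 0)
          = (if dsc (b :: t) j then p + (j+1) + 1 else 0) := by
        intro j; cases dsc (b :: t) j <;> simp <;> ring
      rw [Finset.sum_congr rfl (fun j _ => this j)]
      cases hab : (a.isTop && headBot (b :: t)) <;> simp [add_comm]

theorem amajA_eq_sum : ∀ (l : List L) (p : ℕ),
    amajA p l = ∑ j ∈ Finset.range (l.length - 1), (if asc l j then p + j + 1 else 0)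
  | [], p => by simp [amajA]
  | [a], p => by simp [amajA, headTop]
  | a :: b :: t, p => by
      rw [amajA, amajA_eq_sum (b :: t) (p+1)]
      have hlen : (a :: b :: t).length - 1 = ((b :: t).length - 1) + 1 := by simp
      rw [hlen, Finset.sum_range_succ']
      have h0 : asc (a :: b :: t) 0 = (a.isBot && headTop (b :: t)) := by
        simp [asc, headTop, List.getD]
      have hs : ∀ j : ℕ, asc (a :: b :: t) (j+1) = asc (b :: t) j := fun j => rfl
      simp only [h0, hs]
      have : ∀ j, (if asc (b :: t) j then p + 1 + j + 1 else 0)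
          = (if asc (b :: t) j then p + (j+1) + 1 else 0) := by
        intro j; cases asc (b :: t) j <;> simp <;> ring
      rw [Finset.sum_congr rfl (fun j _ => this j)]
      cases hab : (a.isBot && headTop (b :: t)) <;> simp [add_comm]

/-! ### ballot in prefix-count form -/

theorem bal_iff : ∀ (w : List L) (h : ℕ),
    bal h w ↔ ∀ j, (w.take j).countP L.isBot ≤ h + (w.take j).countP L.isTop
  | [], h => by simp [bal]
  | U :: t, h => by
      rw [bal, bal_iff t (h+1)]
      constructor
      · intro H j
        cases j with
        | zero => simp
        | succ j' =>
            rw [List.take_succ_cons, List.countP_cons, List.countP_cons]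
            have := H j'
            simp [L.isBot, L.isTop] at this ⊢ <;> omega
      · intro H j
        have := H (j+1)
        rw [List.take_succ_cons, List.countP_cons, List.countP_cons] at this
        simp [L.isBot, L.isTop] at this ⊢ <;> omega
  | D :: t, h => by
      rw [bal, bal_iff t (h-1)]
      constructor
      · intro H j
        cases j with
        | zero => simp
        | succ j' =>
            rw [List.take_succ_cons, List.countP_cons, List.countP_cons]
            have := H.2 j'
            have h1 := H.1
            simp [L.isBot, L.isTop] at this ⊢ <;> omega
      · intro H
        have h1 : 1 ≤ h := by
          have := H 1
          simp [List.countP_cons, L.isBot, L.isTop] at this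
          omega
        refine ⟨h1, fun j => ?_⟩
        have := H (j+1)
        rw [List.take_succ_cons, List.countP_cons, List.countP_cons] at this
        simp [L.isBot, L.isTop] at this ⊢ <;> omega
  | B :: t, h => by
      rw [bal, bal_iff t h]
      constructor
      · intro H j
        cases j with
        | zero => simp
        | succ j' =>
            rw [List.take_succ_cons, List.countP_cons, List.countP_cons]
            have := H j'
            simp [L.isBot, L.isTop] at this ⊢ <;> omega
      · intro H j
        have := H (j+1)
        rw [List.take_succ_cons, List.countP_cons, List.countP_cons] at this
        simp [L.isBot, L.isTop] at this ⊢ <;> omega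

theorem countP_top_split : ∀ l : List L,
    l.countP L.isTop = l.countP (· == U) + l.countP (· == B)
  | [] => by simp
  | a :: t => by
      simp only [List.countP_cons]
      rw [countP_top_split t]
      cases a <;> simp [L.isTop] <;> omega

theorem countP_bot_split : ∀ l : List L,
    l.countP L.isBot = l.countP (· == D) + l.countP (· == B)
  | [] => by simp
  | a :: t => by
      simp only [List.countP_cons]
      rw [countP_bot_split t]
      cases a <;> simp [L.isBot] <;> omega

theorem length_split : ∀ l : List L,
    l.length = l.countP (· == U) + l.countP (· == D) + l.countP (· == B)
  | [] => by simp
  | a :: t => by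
      simp only [List.countP_cons, List.length_cons]
      rw [length_split t]
      cases a <;> simp <;> omega

theorem NEU_of_bal {l : List L} (hl : l ≠ []) (hb : bal 0 l)
    (hc : l.countP (· == U) = l.countP (· == D)) : NEU l := by
  intro hlast
  have hdrop : l.dropLast ++ [U] = l := by
    have h1 := List.dropLast_append_getLast hl
    have h2 : l.getLast hl = U := by
      have := List.getLast?_eq_getLast hl
      rw [hlast] at this
      exact (Option.some_injective _ this.symm)
    rwa [h2] at h1
  have htake : l.take (l.length - 1) = l.dropLast := List.dropLast_eq_take.symm
  have hkey := (bal_iff l 0).mp hb (l.length - 1)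
  rw [htake] at hkey
  have hU : l.countP (· == U) = l.dropLast.countP (· == U) + 1 := by
    conv_lhs => rw [← hdrop]
    simp [List.countP_append]
  have hD : l.countP (· == D) = l.dropLast.countP (· == D) := by
    conv_lhs => rw [← hdrop]
    simp [List.countP_append]
  have hB : l.countP (· == B) = l.dropLast.countP (· == B) := by
    conv_lhs => rw [← hdrop]
    simp [List.countP_append]
  have e1 := countP_top_split l.dropLast
  have e2 := countP_bot_split l.dropLast
  omega


/-! ### StrictMono counting machinery -/

/-- number of values of `f` that are `≤ y`. -/
def Nf {n : ℕ} (f : Fin n → ℕ) (y : ℕ) : ℕ :=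
  (Finset.univ.filter (fun i => f i ≤ y)).card

theorem Nf_le {n : ℕ} (f : Fin n → ℕ) (y : ℕ) : Nf f y ≤ n := by
  refine le_trans (Finset.card_filter_le _ _) ?_
  simp

theorem SM_le_iff {n : ℕ} {f : Fin n → ℕ} (hf : StrictMono f) (i : Fin n) (y : ℕ) :
    f i ≤ y ↔ i.val + 1 ≤ Nf f y := by
  constructor
  · intro h
    have hsub : Finset.Iic i ⊆ Finset.univ.filter (fun j => f j ≤ y) := by
      intro j hj
      simp only [Finset.mem_Iic] at hj
      simp only [Finset.mem_filter, Finset.mem_univ, true_and]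
      exact le_trans (hf.monotone hj) h
    have := Finset.card_le_card hsub
    rwa [Fin.card_Iic] at this
  · intro h
    rw [Nf] at h
    by_contra hlt
    push_neg at hlt
    have hsub : Finset.univ.filter (fun j => f j ≤ y) ⊆ Finset.Iio i := by
      intro j hj
      simp only [Finset.mem_filter, Finset.mem_univ, true_and] at hj
      simp only [Finset.mem_Iio]
      exact hf.lt_iff_lt.mp (lt_of_le_of_lt hj hlt)
    have := Finset.card_le_card hsub
    rw [Fin.card_Iio] at this
    omega

theorem col_iff {n : ℕ} {a b : Fin n → ℕ} (ha : StrictMono a) (hb : StrictMono b) :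
    (∀ i, a i ≤ b i) ↔ ∀ v, Nf b v ≤ Nf a v := by
  constructor
  · intro H v
    set t := Nf b v with ht
    rcases Nat.eq_zero_or_pos t with h0 | hpos
    · omega
    · have htn : t ≤ n := Nf_le b v
      have hlt : t - 1 < n := by omega
      set i : Fin n := ⟨t - 1, hlt⟩
      have hbi : b i ≤ v := by
        rw [SM_le_iff hb]
        simp only [i]
        omega
      have hai : a i ≤ v := le_trans (H i) hbi
      have := (SM_le_iff ha i v).mp hai
      simp only [i] at this
      omega
  · intro H i
    have h1 : i.val + 1 ≤ Nf b (b i) := (SM_le_iff hb i (b i)).mp le_rfl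
    have h2 : i.val + 1 ≤ Nf a (b i) := le_trans h1 (H (b i))
    exact (SM_le_iff ha i (b i)).mpr h2

theorem bridge {n m : ℕ} (f : Fin n → ℕ) (hf : StrictMono f)
    (hf1 : ∀ i, 1 ≤ f i) (hfm : ∀ i, f i ≤ m) {l : List L} (hlen : l.length = m)
    (p : L → Bool) (hp : ∀ j, j < m → (p (l.getD j L.B) = true ↔ ∃ i, f i = j + 1))
    (v : ℕ) (hv : v ≤ m) : (l.take v).countP p = Nf f v := by
  have hlen' : (l.take v).length = v := by
    rw [List.length_take, hlen]; omega
  rw [countP_eq_card, hlen']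
  have hgetD : ∀ j, j < v → (l.take v).getD j L.B = l.getD j L.B := by
    intro j hj
    rw [List.getD_eq_getElem?_getD, List.getD_eq_getElem?_getD, List.getElem?_take,
      if_pos hj]
  have himg : (Finset.range v).filter (fun j => p ((l.take v).getD j L.B) = true)
      = Finset.image (fun i => f i - 1) (Finset.univ.filter (fun i => f i ≤ v)) := by
    ext j
    simp only [Finset.mem_filter, Finset.mem_range, Finset.mem_image, Finset.mem_univ,
      true_and]
    constructor
    · rintro ⟨hjv, hpj⟩
      rw [hgetD j hjv] at hpj
      obtain ⟨i, hi⟩ := (hp j (lt_of_lt_of_le hjv hv)).mp hpj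
      exact ⟨i, by omega, by omega⟩
    · rintro ⟨i, hfi, hij⟩
      have h1 := hf1 i
      have hjv : j < v := by omega
      refine ⟨hjv, ?_⟩
      rw [hgetD j hjv]
      exact (hp j (lt_of_lt_of_le hjv hv)).mpr ⟨i, by omega⟩
  rw [himg, Finset.card_image_of_injOn, Nf]
  intro i _ i' _ hii
  simp only at hii
  have := hf1 i; have := hf1 i'
  exact hf.injective (by omega)


/-! ### encoding tableaux as words -/

def letter (t b' : Bool) : L := if t then (if b' then L.B else L.U) else L.D

theorem letter_isTop (t b' : Bool) : (letter t b').isTop = t := by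
  cases t <;> cases b' <;> rfl
theorem letter_isBot (t b' : Bool) : (letter t b').isBot = (!t || b') := by
  cases t <;> cases b' <;> rfl
theorem letter_eqU (t b' : Bool) : (letter t b' == L.U) = (t && !b') := by
  cases t <;> cases b' <;> rfl
theorem letter_eqD (t b' : Bool) : (letter t b' == L.D) = !t := by
  cases t <;> cases b' <;> rfl

def enc (m : ℕ) {n : ℕ} (T : (Fin n → ℕ) × (Fin n → ℕ)) : List L :=
  (List.range m).map fun j => letter (decide (∃ i, T.1 i = j+1)) (decide (∃ i, T.2 i = j+1))

theorem enc_length {m n : ℕ} (T : (Fin n → ℕ) × (Fin n → ℕ)) : (enc m T).length = m := by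
  simp [enc]

theorem enc_getD {m n : ℕ} (T : (Fin n → ℕ) × (Fin n → ℕ)) {j : ℕ} (hj : j < m) :
    (enc m T).getD j L.B
      = letter (decide (∃ i, T.1 i = j+1)) (decide (∃ i, T.2 i = j+1)) := by
  rw [enc, List.getD_eq_getElem?_getD, List.getElem?_map, List.getElem?_range hj]
  rfl

section TabFacts

variable {n k : ℕ} {T : (Fin n → ℕ) × (Fin n → ℕ)}

theorem tab_bounds (hT : T ∈ RInc n k) :
    (∀ i, 1 ≤ T.1 i ∧ T.1 i ≤ 2*n-k) ∧ (∀ i, 1 ≤ T.2 i ∧ T.2 i ≤ 2*n-k) := by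
  obtain ⟨h1, h2, h3, h4⟩ := hT
  constructor
  · intro i
    have : T.1 i ∈ Set.Icc 1 (2*n-k) := by
      rw [← h4]; exact Or.inl ⟨i, rfl⟩
    exact this
  · intro i
    have : T.2 i ∈ Set.Icc 1 (2*n-k) := by
      rw [← h4]; exact Or.inr ⟨i, rfl⟩
    exact this

theorem tab_cover (hT : T ∈ RInc n k) {v : ℕ} (hv1 : 1 ≤ v) (hv2 : v ≤ 2*n-k) :
    (∃ i, T.1 i = v) ∨ (∃ i, T.2 i = v) := by
  obtain ⟨h1, h2, h3, h4⟩ := hT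
  have : v ∈ Set.range T.1 ∪ Set.range T.2 := by
    rw [h4]; exact ⟨hv1, hv2⟩
  rcases this with ⟨i, hi⟩ | ⟨i, hi⟩
  · exact Or.inl ⟨i, hi⟩
  · exact Or.inr ⟨i, hi⟩

theorem enc_isTop (hT : T ∈ RInc n k) {j : ℕ} (hj : j < 2*n-k) :
    (((enc (2*n-k) T).getD j L.B).isTop = true) ↔ ∃ i, T.1 i = j + 1 := by
  rw [enc_getD T hj, letter_isTop, decide_eq_true_iff]

theorem enc_isBot (hT : T ∈ RInc n k) {j : ℕ} (hj : j < 2*n-k) :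
    (((enc (2*n-k) T).getD j L.B).isBot = true) ↔ ∃ i, T.2 i = j + 1 := by
  rw [enc_getD T hj, letter_isBot]
  simp only [Bool.or_eq_true, Bool.not_eq_true', decide_eq_false_iff_not, decide_eq_true_iff]
  constructor
  · rintro (h | h)
    · rcases tab_cover hT (v := j+1) (by omega) (by omega) with h' | h'
      · exact absurd h' h
      · exact h'
    · exact h
  · exact fun h => Or.inr h

theorem enc_eqU (hT : T ∈ RInc n k) {j : ℕ} (hj : j < 2*n-k) :
    (((enc (2*n-k) T).getD j L.B == L.U) = true)
      ↔ ((∃ i, T.1 i = j + 1) ∧ ¬∃ i, T.2 i = j + 1) := by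
  rw [enc_getD T hj, letter_eqU]
  simp

theorem enc_eqD (hT : T ∈ RInc n k) {j : ℕ} (hj : j < 2*n-k) :
    (((enc (2*n-k) T).getD j L.B == L.D) = true)
      ↔ ((∃ i, T.2 i = j + 1) ∧ ¬∃ i, T.1 i = j + 1) := by
  rw [enc_getD T hj, letter_eqD]
  simp only [Bool.not_eq_true', decide_eq_false_iff_not]
  constructor
  · intro h
    refine ⟨?_, h⟩
    rcases tab_cover hT (v := j+1) (by omega) (by omega) with h' | h'
    · exact absurd h' h
    · exact h'
  · exact fun h => h.2

/-- cardinality transport along `j ↦ j+1`. -/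
theorem card_filter_range_eq (m : ℕ) (q : ℕ → Prop) [DecidablePred q] (S : Finset ℕ)
    (h : ∀ v, v ∈ S ↔ ∃ j, j < m ∧ q j ∧ v = j + 1) :
    S.card = ((Finset.range m).filter q).card := by
  have himg : S = Finset.image (fun j => j + 1) ((Finset.range m).filter q) := by
    ext v
    rw [h v]
    simp only [Finset.mem_image, Finset.mem_filter, Finset.mem_range]
    constructor
    · rintro ⟨j, hj, hq, rfl⟩; exact ⟨j, ⟨hj, hq⟩, rfl⟩
    · rintro ⟨j, ⟨hj, hq⟩, rfl⟩; exact ⟨j, hj, hq, rfl⟩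
  rw [himg]
  exact Finset.card_image_of_injective _ (fun a b hab => by omega)

theorem tab_card_S1 (hT : T ∈ RInc n k) : (Finset.image T.1 Finset.univ).card = n := by
  rw [Finset.card_image_of_injective _ hT.1.injective]
  simp

theorem tab_card_S2 (hT : T ∈ RInc n k) : (Finset.image T.2 Finset.univ).card = n := by
  rw [Finset.card_image_of_injective _ hT.2.1.injective]
  simp

theorem tab_union (hT : T ∈ RInc n k) :
    Finset.image T.1 Finset.univ ∪ Finset.image T.2 Finset.univ = Finset.Icc 1 (2*n-k) := by
  apply Finset.coe_injective
  simp only [Finset.coe_union, Finset.coe_image, Finset.coe_univ, Set.image_univ,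
    Finset.coe_Icc]
  exact hT.2.2.2

theorem tab_card_inter (hk : k ≤ n) (hT : T ∈ RInc n k) :
    (Finset.image T.1 Finset.univ ∩ Finset.image T.2 Finset.univ).card = k := by
  have h := Finset.card_union_add_card_inter (Finset.image T.1 Finset.univ)
    (Finset.image T.2 Finset.univ)
  rw [tab_union hT, tab_card_S1 hT, tab_card_S2 hT, Nat.card_Icc] at h
  omega

theorem enc_countU (hn : 1 ≤ n) (hk : k ≤ n) (hT : T ∈ RInc n k) :
    (enc (2*n-k) T).countP (· == L.U) = n - k := by
  rw [countP_eq_card, enc_length]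
  have hS : ∀ v, v ∈ (Finset.image T.1 Finset.univ) \ (Finset.image T.2 Finset.univ)
      ↔ ∃ j, j < 2*n-k ∧ ((enc (2*n-k) T).getD j L.B == L.U) = true ∧ v = j + 1 := by
    intro v
    simp only [Finset.mem_sdiff, Finset.mem_image, Finset.mem_univ, true_and]
    constructor
    · rintro ⟨⟨i, hi⟩, hni⟩
      have hb := (tab_bounds hT).1 i
      refine ⟨v - 1, by omega, ?_, by omega⟩
      rw [enc_eqU hT (by omega)]
      constructor
      · exact ⟨i, by omega⟩
      · rintro ⟨i', hi'⟩; exact hni ⟨i', by omega⟩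
    · rintro ⟨j, hj, hq, rfl⟩
      rw [enc_eqU hT hj] at hq
      obtain ⟨⟨i, hi⟩, hni⟩ := hq
      exact ⟨⟨i, hi⟩, fun ⟨i', hi'⟩ => hni ⟨i', hi'⟩⟩
  have hcard := card_filter_range_eq (2*n-k)
    (fun j => ((enc (2*n-k) T).getD j L.B == L.U) = true)
    ((Finset.image T.1 Finset.univ) \ (Finset.image T.2 Finset.univ)) hS
  have h2 := Finset.card_sdiff_add_card_inter (Finset.image T.1 Finset.univ)
    (Finset.image T.2 Finset.univ)
  rw [tab_card_S1 hT, tab_card_inter hk hT] at h2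
  omega

theorem enc_countD (hn : 1 ≤ n) (hk : k ≤ n) (hT : T ∈ RInc n k) :
    (enc (2*n-k) T).countP (· == L.D) = n - k := by
  rw [countP_eq_card, enc_length]
  have hS : ∀ v, v ∈ (Finset.image T.2 Finset.univ) \ (Finset.image T.1 Finset.univ)
      ↔ ∃ j, j < 2*n-k ∧ ((enc (2*n-k) T).getD j L.B == L.D) = true ∧ v = j + 1 := by
    intro v
    simp only [Finset.mem_sdiff, Finset.mem_image, Finset.mem_univ, true_and]
    constructor
    · rintro ⟨⟨i, hi⟩, hni⟩
      have hb := (tab_bounds hT).2 i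
      refine ⟨v - 1, by omega, ?_, by omega⟩
      rw [enc_eqD hT (by omega)]
      constructor
      · exact ⟨i, by omega⟩
      · rintro ⟨i', hi'⟩; exact hni ⟨i', by omega⟩
    · rintro ⟨j, hj, hq, rfl⟩
      rw [enc_eqD hT hj] at hq
      obtain ⟨⟨i, hi⟩, hni⟩ := hq
      exact ⟨⟨i, hi⟩, fun ⟨i', hi'⟩ => hni ⟨i', hi'⟩⟩
  have hcard := card_filter_range_eq (2*n-k)
    (fun j => ((enc (2*n-k) T).getD j L.B == L.D) = true)
    ((Finset.image T.2 Finset.univ) \ (Finset.image T.1 Finset.univ)) hS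
  have h2 := Finset.card_sdiff_add_card_inter (Finset.image T.2 Finset.univ)
    (Finset.image T.1 Finset.univ)
  rw [tab_card_S2 hT, Finset.inter_comm, tab_card_inter hk hT] at h2
  omega

theorem enc_bal (hT : T ∈ RInc n k) : bal 0 (enc (2*n-k) T) := by
  rw [bal_iff]
  intro j
  set m := 2*n-k with hm
  set l := enc m T with hl
  have hlen : l.length = m := enc_length T
  set v := min j m with hv
  have htake : l.take j = l.take v := by
    rcases le_or_gt j m with h | h
    · rw [hv, min_eq_left h]
    · rw [List.take_of_length_le (by omega), List.take_of_length_le (by omega)]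
  rw [htake]
  have hb1 := (tab_bounds hT).1
  have hb2 := (tab_bounds hT).2
  have e1 : (l.take v).countP L.isTop = Nf T.1 v :=
    bridge T.1 hT.1 (fun i => (hb1 i).1) (fun i => (hb1 i).2) hlen L.isTop
      (fun j hj => enc_isTop hT hj) v (min_le_right _ _)
  have e2 : (l.take v).countP L.isBot = Nf T.2 v :=
    bridge T.2 hT.2.1 (fun i => (hb2 i).1) (fun i => (hb2 i).2) hlen L.isBot
      (fun j hj => enc_isBot hT hj) v (min_le_right _ _)
  rw [e1, e2, Nat.zero_add]
  exact (col_iff hT.1 hT.2.1).mp hT.2.2.1 v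

theorem enc_NEU (hn : 1 ≤ n) (hk : k ≤ n) (hT : T ∈ RInc n k) : NEU (enc (2*n-k) T) := by
  set m := 2*n-k with hm
  have hm1 : 1 ≤ m := by omega
  have hmS2 : ∃ i, T.2 i = m := by
    rcases tab_cover hT hm1 le_rfl with ⟨i, hi⟩ | h
    · have h3 := hT.2.2.1 i
      have hb := (tab_bounds hT).2 i
      exact ⟨i, by omega⟩
    · exact h
  intro hlast
  rw [List.getLast?_eq_getElem?, enc_length] at hlast
  have hj : m - 1 < m := by omega
  have : (enc m T).getD (m-1) L.B = L.U := by
    rw [List.getD_eq_getElem?_getD, hlast]; rfl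
  rw [enc_getD T hj] at this
  have hb' : (decide (∃ i, T.2 i = (m-1)+1)) = true := by
    rw [decide_eq_true_iff]
    obtain ⟨i, hi⟩ := hmS2
    exact ⟨i, by omega⟩
  rw [hb'] at this
  cases hd : (decide (∃ i, T.1 i = (m-1)+1)) <;> rw [hd] at this <;> simp [letter] at this

end TabFacts


/-! ### stat transfer -/

section Transfer

variable {n k : ℕ} {T : (Fin n → ℕ) × (Fin n → ℕ)}

theorem maj_transfer (hT : T ∈ RInc n k) : maj T = majA 0 (enc (2*n-k) T) := by
  rw [majA_eq_sum, enc_length, maj]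
  have hF : (Finset.image T.1 Finset.univ).filter (fun i => ∃ j, T.2 j = i + 1)
      = Finset.image (fun j => j+1)
          ((Finset.range (2*n-k - 1)).filter (fun j => dsc (enc (2*n-k) T) j = true)) := by
    ext v
    simp only [Finset.mem_filter, Finset.mem_image, Finset.mem_univ, true_and,
      Finset.mem_range]
    constructor
    · rintro ⟨⟨i, hi⟩, i', hi'⟩
      have hb1 := (tab_bounds hT).1 i
      have hb2 := (tab_bounds hT).2 i'
      refine ⟨v - 1, ⟨by omega, ?_⟩, by omega⟩
      rw [dsc, Bool.and_eq_true, enc_isTop hT (by omega), enc_isBot hT (by omega)]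
      exact ⟨⟨i, by omega⟩, ⟨i', by omega⟩⟩
    · rintro ⟨j, ⟨hj, hd⟩, rfl⟩
      rw [dsc, Bool.and_eq_true, enc_isTop hT (by omega), enc_isBot hT (by omega)] at hd
      obtain ⟨⟨i, hi⟩, ⟨i', hi'⟩⟩ := hd
      exact ⟨⟨i, hi⟩, ⟨i', by omega⟩⟩
  rw [hF, Finset.sum_image (fun a _ b _ hab => by omega)]
  rw [Finset.sum_filter]
  apply Finset.sum_congr rfl
  intro j _
  cases hd : dsc (enc (2*n-k) T) j <;> simp [hd]

theorem amaj_transfer (hT : T ∈ RInc n k) : amaj T = amajA 0 (enc (2*n-k) T) := by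
  rw [amajA_eq_sum, enc_length, amaj]
  have hF : (Finset.image T.2 Finset.univ).filter (fun i => ∃ j, T.1 j = i + 1)
      = Finset.image (fun j => j+1)
          ((Finset.range (2*n-k - 1)).filter (fun j => asc (enc (2*n-k) T) j = true)) := by
    ext v
    simp only [Finset.mem_filter, Finset.mem_image, Finset.mem_univ, true_and,
      Finset.mem_range]
    constructor
    · rintro ⟨⟨i, hi⟩, i', hi'⟩
      have hb1 := (tab_bounds hT).2 i
      have hb2 := (tab_bounds hT).1 i'
      refine ⟨v - 1, ⟨by omega, ?_⟩, by omega⟩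
      rw [asc, Bool.and_eq_true, enc_isBot hT (by omega), enc_isTop hT (by omega)]
      exact ⟨⟨i, by omega⟩, ⟨i', by omega⟩⟩
    · rintro ⟨j, ⟨hj, hd⟩, rfl⟩
      rw [asc, Bool.and_eq_true, enc_isBot hT (by omega), enc_isTop hT (by omega)] at hd
      obtain ⟨⟨i, hi⟩, ⟨i', hi'⟩⟩ := hd
      exact ⟨⟨i, hi⟩, ⟨i', by omega⟩⟩
  rw [hF, Finset.sum_image (fun a _ b _ hab => by omega)]
  rw [Finset.sum_filter]
  apply Finset.sum_congr rfl
  intro j _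
  cases hd : asc (enc (2*n-k) T) j <;> simp [hd]

end Transfer

/-! ### decoding -/

theorem decode {n k : ℕ} (hn : 1 ≤ n) (hk : k ≤ n) {l : List L}
    (hlen : l.length = 2*n-k) (hU : l.countP (· == L.U) = n - k)
    (hD : l.countP (· == L.D) = n - k) (hbal : bal 0 l) :
    ∃ T ∈ RInc n k, enc (2*n-k) T = l := by
  have hB : l.countP (· == L.B) = k := by
    have := length_split l; omega
  have hTopCount : l.countP L.isTop = n := by rw [countP_top_split]; omega
  have hBotCount : l.countP L.isBot = n := by rw [countP_bot_split]; omega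
  have hI1card : ((Finset.range (2*n-k)).filter
      (fun j => (l.getD j L.B).isTop = true)).card = n := by
    have := countP_eq_card L.isTop l
    rw [hlen] at this; omega
  have hI2card : ((Finset.range (2*n-k)).filter
      (fun j => (l.getD j L.B).isBot = true)).card = n := by
    have := countP_eq_card L.isBot l
    rw [hlen] at this; omega
  set I1 := (Finset.range (2*n-k)).filter (fun j => (l.getD j L.B).isTop = true) with hI1
  set I2 := (Finset.range (2*n-k)).filter (fun j => (l.getD j L.B).isBot = true) with hI2
  set e1 := I1.orderEmbOfFin hI1card with he1
  set e2 := I2.orderEmbOfFin hI2card with he2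
  set a : Fin n → ℕ := fun i => e1 i + 1 with ha
  set b : Fin n → ℕ := fun i => e2 i + 1 with hb
  have hamono : StrictMono a := by
    intro i j hij
    have := e1.strictMono hij
    simp only [ha]; omega
  have hbmono : StrictMono b := by
    intro i j hij
    have := e2.strictMono hij
    simp only [hb]; omega
  have hmem1 : ∀ j, (∃ i, a i = j + 1) ↔ j ∈ I1 := by
    intro j
    constructor
    · rintro ⟨i, hi⟩
      have : e1 i = j := by simp only [ha] at hi; omega
      rw [← this]
      have : e1 i ∈ Set.range e1 := ⟨i, rfl⟩
      rw [Finset.range_orderEmbOfFin] at this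
      exact this
    · intro hj
      have : j ∈ Set.range e1 := by
        rw [Finset.range_orderEmbOfFin]; exact hj
      obtain ⟨i, hi⟩ := this
      exact ⟨i, by simp only [ha]; omega⟩
  have hmem2 : ∀ j, (∃ i, b i = j + 1) ↔ j ∈ I2 := by
    intro j
    constructor
    · rintro ⟨i, hi⟩
      have : e2 i = j := by simp only [hb] at hi; omega
      rw [← this]
      have : e2 i ∈ Set.range e2 := ⟨i, rfl⟩
      rw [Finset.range_orderEmbOfFin] at this
      exact this
    · intro hj
      have : j ∈ Set.range e2 := by
        rw [Finset.range_orderEmbOfFin]; exact hj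
      obtain ⟨i, hi⟩ := this
      exact ⟨i, by simp only [hb]; omega⟩
  have hI1mem : ∀ j, j ∈ I1 ↔ (j < 2*n-k ∧ (l.getD j L.B).isTop = true) := by
    intro j; rw [hI1]; simp [Finset.mem_filter]
  have hI2mem : ∀ j, j ∈ I2 ↔ (j < 2*n-k ∧ (l.getD j L.B).isBot = true) := by
    intro j; rw [hI2]; simp [Finset.mem_filter]
  have habound : ∀ i, 1 ≤ a i ∧ a i ≤ 2*n-k := by
    intro i
    have : e1 i ∈ I1 := Finset.orderEmbOfFin_mem I1 hI1card i
    rw [hI1mem] at this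
    simp only [ha]; omega
  have hbbound : ∀ i, 1 ≤ b i ∧ b i ≤ 2*n-k := by
    intro i
    have : e2 i ∈ I2 := Finset.orderEmbOfFin_mem I2 hI2card i
    rw [hI2mem] at this
    simp only [hb]; omega
  have hp1 : ∀ j, j < 2*n-k → ((l.getD j L.B).isTop = true ↔ ∃ i, a i = j + 1) := by
    intro j hj
    rw [hmem1 j, hI1mem j]
    constructor
    · exact fun h => ⟨hj, h⟩
    · exact fun h => h.2
  have hp2 : ∀ j, j < 2*n-k → ((l.getD j L.B).isBot = true ↔ ∃ i, b i = j + 1) := by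
    intro j hj
    rw [hmem2 j, hI2mem j]
    constructor
    · exact fun h => ⟨hj, h⟩
    · exact fun h => h.2
  have hcol : ∀ i, a i ≤ b i := by
    rw [col_iff hamono hbmono]
    intro v
    rcases le_or_gt v (2*n-k) with hv | hv
    · rw [← bridge a hamono (fun i => (habound i).1) (fun i => (habound i).2) hlen
        L.isTop (fun j hj => hp1 j hj) v hv]
      rw [← bridge b hbmono (fun i => (hbbound i).1) (fun i => (hbbound i).2) hlen
        L.isBot (fun j hj => hp2 j hj) v hv]
      have := (bal_iff l 0).mp hbal v
      omega
    · have h1 : Nf a v = n := by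
        rw [Nf, Finset.filter_true_of_mem (fun i _ => by have := (habound i).2; omega)]
        simp
      have h2 : Nf b v = n := by
        rw [Nf, Finset.filter_true_of_mem (fun i _ => by have := (hbbound i).2; omega)]
        simp
      omega
  have hIunion : I1 ∪ I2 = Finset.range (2*n-k) := by
    ext j
    rw [Finset.mem_union, hI1mem, hI2mem, Finset.mem_range]
    constructor
    · rintro (h | h) <;> exact h.1
    · intro hj
      cases hx : l.getD j L.B with
      | U => exact Or.inl ⟨hj, rfl⟩
      | D => exact Or.inr ⟨hj, rfl⟩
      | B => exact Or.inl ⟨hj, rfl⟩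
  have hunion : Set.range a ∪ Set.range b = Set.Icc 1 (2*n-k) := by
    have hra : Set.range a = (fun j => j + 1) '' ↑I1 := by
      have : a = (fun j => j + 1) ∘ e1 := rfl
      rw [this, Set.range_comp, Finset.range_orderEmbOfFin]
    have hrb : Set.range b = (fun j => j + 1) '' ↑I2 := by
      have : b = (fun j => j + 1) ∘ e2 := rfl
      rw [this, Set.range_comp, Finset.range_orderEmbOfFin]
    rw [hra, hrb, ← Set.image_union]
    have : (↑I1 ∪ ↑I2 : Set ℕ) = ↑(I1 ∪ I2) := (Finset.coe_union I1 I2).symm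
    rw [this, hIunion]
    ext v
    simp only [Set.mem_image, Finset.mem_coe, Finset.mem_range, Set.mem_Icc]
    constructor
    · rintro ⟨j, hj, rfl⟩; omega
    · intro hv; exact ⟨v - 1, by omega, by omega⟩
  refine ⟨(a, b), ⟨hamono, hbmono, hcol, hunion⟩, ?_⟩
  apply List.ext_getElem (by rw [enc_length, hlen])
  intro j h1 h2
  rw [enc_length] at h1
  have hj : j < 2*n-k := h1
  rw [← List.getD_eq_getElem (enc (2*n-k) (a, b)) L.B, ← List.getD_eq_getElem l L.B]
  rw [show (enc (2*n-k) ((a : Fin n → ℕ), (b : Fin n → ℕ))).getD j L.B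
      = letter (decide (∃ i, a i = j + 1)) (decide (∃ i, b i = j + 1)) from
    enc_getD (a, b) hj]
  have hd1 : decide (∃ i, a i = j + 1) = (l.getD j L.B).isTop := by
    by_cases hex : ∃ i, a i = j + 1
    · rw [(hp1 j hj).mpr hex]; exact decide_eq_true hex
    · have hxf : (l.getD j L.B).isTop = false := by
        have h' := hp1 j hj
        simp only [hex, iff_false] at h'
        exact Bool.eq_false_iff.mpr h'
      rw [hxf]; exact decide_eq_false hex
  have hd2 : decide (∃ i, b i = j + 1) = (l.getD j L.B).isBot := by
    by_cases hex : ∃ i, b i = j + 1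
    · rw [(hp2 j hj).mpr hex]; exact decide_eq_true hex
    · have hxf : (l.getD j L.B).isBot = false := by
        have h' := hp2 j hj
        simp only [hex, iff_false] at h'
        exact Bool.eq_false_iff.mpr h'
      rw [hxf]; exact decide_eq_false hex
  rw [hd1, hd2]
  cases hx : l.getD j L.B <;> rfl


/-! ### injectivity of enc, finiteness -/

theorem strictMono_eq_of_image_eq {n : ℕ} {f g : Fin n → ℕ} (hf : StrictMono f)
    (hg : StrictMono g) (h : Finset.image f Finset.univ = Finset.image g Finset.univ) :
    f = g := by
  have hc : (Finset.image g Finset.univ).card = n := by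
    rw [Finset.card_image_of_injective _ hg.injective]; simp
  have h1 : f = ⇑((Finset.image g Finset.univ).orderEmbOfFin hc) := by
    apply Finset.orderEmbOfFin_unique hc ?_ hf
    intro x
    rw [← h]
    exact Finset.mem_image_of_mem f (Finset.mem_univ x)
  have h2 : g = ⇑((Finset.image g Finset.univ).orderEmbOfFin hc) := by
    apply Finset.orderEmbOfFin_unique hc ?_ hg
    intro x
    exact Finset.mem_image_of_mem g (Finset.mem_univ x)
  exact h1.trans h2.symm

theorem enc_injOn (n k : ℕ) : Set.InjOn (enc (2*n-k)) (RInc n k) := by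
  intro T hT T' hT' heq
  have himg1 : Finset.image T.1 Finset.univ = Finset.image T'.1 Finset.univ := by
    ext v
    simp only [Finset.mem_image, Finset.mem_univ, true_and]
    rcases Nat.eq_zero_or_pos v with rfl | hv
    · constructor <;> rintro ⟨i, hi⟩
      · have := (tab_bounds hT).1 i; omega
      · have := (tab_bounds hT').1 i; omega
    · rcases le_or_gt v (2*n-k) with hvm | hvm
      · have hj : v - 1 < 2*n-k := by omega
        have e1 := enc_isTop hT hj
        have e2 := enc_isTop hT' hj
        rw [heq] at e1
        have hiff : (∃ i, T.1 i = (v-1) + 1) ↔ (∃ i, T'.1 i = (v-1) + 1) := by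
          rw [← e1, ← e2]
        have hv1 : (v-1) + 1 = v := Nat.succ_pred_eq_of_pos hv
        rw [hv1] at hiff
        exact hiff
      · constructor <;> rintro ⟨i, hi⟩
        · have := (tab_bounds hT).1 i; omega
        · have := (tab_bounds hT').1 i; omega
  have himg2 : Finset.image T.2 Finset.univ = Finset.image T'.2 Finset.univ := by
    ext v
    simp only [Finset.mem_image, Finset.mem_univ, true_and]
    rcases Nat.eq_zero_or_pos v with rfl | hv
    · constructor <;> rintro ⟨i, hi⟩
      · have := (tab_bounds hT).2 i; omega
      · have := (tab_bounds hT').2 i; omega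
    · rcases le_or_gt v (2*n-k) with hvm | hvm
      · have hj : v - 1 < 2*n-k := by omega
        have e1 := enc_isBot hT hj
        have e2 := enc_isBot hT' hj
        rw [heq] at e1
        have hiff : (∃ i, T.2 i = (v-1) + 1) ↔ (∃ i, T'.2 i = (v-1) + 1) := by
          rw [← e1, ← e2]
        have hv1 : (v-1) + 1 = v := Nat.succ_pred_eq_of_pos hv
        rw [hv1] at hiff
        exact hiff
      · constructor <;> rintro ⟨i, hi⟩
        · have := (tab_bounds hT).2 i; omega
        · have := (tab_bounds hT').2 i; omega
  have h1 := strictMono_eq_of_image_eq hT.1 hT'.1 himg1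
  have h2 := strictMono_eq_of_image_eq hT.2.1 hT'.2.1 himg2
  exact Prod.ext h1 h2

theorem RInc_finite (n k : ℕ) : (RInc n k).Finite := by
  have h1 : (Set.univ.pi (fun _ : Fin n => Set.Iic (2*n-k))).Finite :=
    Set.Finite.pi (fun _ => Set.finite_Iic _)
  apply Set.Finite.subset (h1.prod h1)
  intro T hT
  constructor
  · rw [Set.mem_univ_pi]
    exact fun i => ((tab_bounds hT).1 i).2
  · rw [Set.mem_univ_pi]
    exact fun i => ((tab_bounds hT).2 i).2

/-- the set of words corresponding to tableaux -/
def Wset (n k : ℕ) : Set (List L) :=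
  {l | l.length = 2*n-k ∧ l.countP (· == L.U) = n - k ∧ l.countP (· == L.D) = n - k ∧
    bal 0 l}

theorem enc_bijOn (n k : ℕ) (hn : 1 ≤ n) (hk : k ≤ n) :
    Set.BijOn (enc (2*n-k)) (RInc n k) (Wset n k) := by
  refine ⟨?_, enc_injOn n k, ?_⟩
  · intro T hT
    exact ⟨enc_length T, enc_countU hn hk hT, enc_countD hn hk hT, enc_bal hT⟩
  · intro l hl
    obtain ⟨hlen, hU, hD, hbal⟩ := hl
    obtain ⟨T, hT, hTl⟩ := decode hn hk hlen hU hD hbal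
    exact ⟨T, hT, hTl⟩

theorem Wset_finite (n k : ℕ) (hn : 1 ≤ n) (hk : k ≤ n) : (Wset n k).Finite := by
  rw [← (enc_bijOn n k hn hk).image_eq]
  exact (RInc_finite n k).image _

theorem phi_bijOn (n k : ℕ) (hn : 1 ≤ n) (hk : k ≤ n) :
    Set.BijOn phi (Wset n k) (Wset n k) := by
  have hmaps : Set.MapsTo phi (Wset n k) (Wset n k) := by
    intro l hl
    obtain ⟨hlen, hU, hD, hbal⟩ := hl
    refine ⟨?_, ?_, ?_, bal_phi l 0 hbal⟩
    · rw [length_phi, hlen]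
    · rw [(phi_perm l).countP_eq]; exact hU
    · rw [(phi_perm l).countP_eq]; exact hD
  exact ((Wset_finite n k hn hk).injOn_iff_bijOn_of_mapsTo hmaps).mp
    (fun a _ b _ h => phi_inj a b h)

theorem key_Wset {n k : ℕ} (hn : 1 ≤ n) (hk : k ≤ n) {l : List L} (hl : l ∈ Wset n k) :
    majA 0 (phi l) = amajA 0 l + (n - k) := by
  obtain ⟨hlen, hU, hD, hbal⟩ := hl
  have hne : l ≠ [] := by
    intro h; rw [h] at hlen; simp at hlen; omega
  have hNEU : NEU l := NEU_of_bal hne hbal (by rw [hU, hD])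
  have := key_phi l hNEU 0
  rw [this]
  simp only [cU]
  rw [hU]
  simp

end MajWord

open MajWord

/-- Σ_{T ∈ RInc_k(2×n)} q^maj(T) = q^(n−k) · Σ_{T ∈ RInc_k(2×n)} q^amaj(T). -/
theorem maj_eq_shifted_amaj (n k : ℕ) (hn : 1 ≤ n) (hk : k ≤ n) :
    ∑ᶠ T ∈ RInc n k, (X : Polynomial ℤ) ^ maj T
      = X ^ (n - k) * ∑ᶠ T ∈ RInc n k, (X : Polynomial ℤ) ^ amaj T := by
  classical
  have h1 : ∑ᶠ T ∈ RInc n k, (X : Polynomial ℤ) ^ maj T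
      = ∑ᶠ l ∈ Wset n k, (X : Polynomial ℤ) ^ majA 0 l :=
    finsum_mem_eq_of_bijOn _ (enc_bijOn n k hn hk)
      (fun T hT => by rw [maj_transfer hT])
  have h2 : ∑ᶠ T ∈ RInc n k, (X : Polynomial ℤ) ^ amaj T
      = ∑ᶠ l ∈ Wset n k, (X : Polynomial ℤ) ^ amajA 0 l :=
    finsum_mem_eq_of_bijOn _ (enc_bijOn n k hn hk)
      (fun T hT => by rw [amaj_transfer hT])
  have h3 : ∑ᶠ l ∈ Wset n k, (X : Polynomial ℤ) ^ (amajA 0 l + (n - k))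
      = ∑ᶠ l ∈ Wset n k, (X : Polynomial ℤ) ^ majA 0 l :=
    finsum_mem_eq_of_bijOn _ (phi_bijOn n k hn hk)
      (fun l hl => by rw [key_Wset hn hk hl])
  rw [h1, h2, ← h3]
  have hWfin := Wset_finite n k hn hk
  rw [finsum_mem_eq_finite_toFinset_sum _ hWfin, finsum_mem_eq_finite_toFinset_sum _ hWfin,
    Finset.mul_sum]
  apply Finset.sum_congr rfl
  intro l _
  rw [pow_add, mul_comm]
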